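/- Let u be a convex function on ℝ^n with u(0)=0, Du(0)=0, Ω_t = {u < t}, and let C₁, C₂ ≥ 1 be constants. Then ∫_{Ω_{t/C₂}} |t/C₂ − u(x)|^{n/(n-1)} dx ≥ C₃^{-1} ∫_{Ω_{tC₁}} |tC₁ − u(x)|^{n/(n-1)} dx for a constant C₃ depending only on n, C₁, C₂, for all t > 0. -/

import Mathlib

open MeasureTheory Set Bornology Pointwise

private lemma add_rpow_le_two_rpow {a b p : ℝ} (ha : 0 ≤ a) (hb : 0 ≤ b) (hp : 0 ≤ p) :
    (a + b) ^ p ≤ 2 ^ p * (a ^ p + b ^ p) := by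
  have h2 : (0:ℝ) ≤ 2 := by norm_num
  rcases le_total a b with h | h
  · calc (a + b) ^ p ≤ (2 * b) ^ p := Real.rpow_le_rpow (by linarith) (by linarith) hp
      _ = 2 ^ p * b ^ p := Real.mul_rpow h2 hb
      _ ≤ 2 ^ p * (a ^ p + b ^ p) := by
        nlinarith [Real.rpow_nonneg ha p, Real.rpow_nonneg h2 p]
  · calc (a + b) ^ p ≤ (2 * a) ^ p := Real.rpow_le_rpow (by linarith) (by linarith) hp
      _ = 2 ^ p * a ^ p := Real.mul_rpow h2 ha
      _ ≤ 2 ^ p * (a ^ p + b ^ p) := by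
        nlinarith [Real.rpow_nonneg hb p, Real.rpow_nonneg h2 p]

set_option maxHeartbeats 1000000 in
theorem sublevel_integral_comparison (n : ℕ) (hn : 2 ≤ n)
    (C₁ C₂ : ℝ) (h1 : 1 ≤ C₁) (h2 : 1 ≤ C₂) :
    ∃ C₃ > (0:ℝ), ∀ u : EuclideanSpace ℝ (Fin n) → ℝ,
      ConvexOn ℝ Set.univ u → u 0 = 0 → gradient u 0 = 0 →
      (∀ t : ℝ, IsBounded {x | u x < t}) →
      ∀ t : ℝ, 0 < t →
        C₃⁻¹ * ∫ x in {x | u x < t * C₁}, |t * C₁ - u x| ^ ((n : ℝ) / (n - 1)) ≤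
          ∫ x in {x | u x < t / C₂}, |t / C₂ - u x| ^ ((n : ℝ) / (n - 1)) := by
  have hn2 : (2:ℝ) ≤ (n:ℝ) := by exact_mod_cast hn
  set p : ℝ := (n : ℝ) / ((n:ℝ) - 1) with hpdef
  have hp0 : 0 < p := div_pos (by linarith) (by linarith)
  have hC10 : (0:ℝ) < C₁ := lt_of_lt_of_le one_pos h1
  have hC20 : (0:ℝ) < C₂ := lt_of_lt_of_le one_pos h2
  have hCC : (0:ℝ) < C₁ * C₂ := mul_pos hC10 hC20
  have hCC1 : (1:ℝ) ≤ C₁ * C₂ := by nlinarith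
  set C₃ : ℝ := 2 ^ p * (C₁ * C₂) ^ p + 2 ^ p * (2 * C₁ * C₂) ^ p * (2 * C₁ * C₂) ^ n with hC₃def
  have hC₃pos : 0 < C₃ := by positivity
  refine ⟨C₃, hC₃pos, ?_⟩
  intro u hu h0 _ hbdd t ht
  set s₁ : ℝ := t * C₁ with hs₁def
  set s₂ : ℝ := t / C₂ with hs₂def
  set s₃ : ℝ := s₂ / 2 with hs₃def
  have hs1 : 0 < s₁ := mul_pos ht hC10
  have hs2 : 0 < s₂ := div_pos ht hC20
  have hs3 : 0 < s₃ := by positivity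
  have hs21 : s₂ ≤ s₁ := le_trans (div_le_self ht.le h2) (le_mul_of_one_le_right ht.le h1)
  have hs32 : s₃ ≤ s₂ := by linarith
  have hcont : Continuous u :=
    continuousOn_univ.mp (hu.continuousOn isOpen_univ)
  have hmeas : ∀ a : ℝ, MeasurableSet {x : EuclideanSpace ℝ (Fin n) | u x < a} :=
    fun a => (isOpen_lt hcont continuous_const).measurableSet
  have hfin : ∀ a : ℝ, volume {x : EuclideanSpace ℝ (Fin n) | u x < a} ≠ ⊤ :=
    fun a => (hbdd a).measure_lt_top.ne
  have hint : ∀ (a : ℝ) (g : EuclideanSpace ℝ (Fin n) → ℝ), Continuous g →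
      IntegrableOn g {x | u x < a} volume := fun a g hg =>
    (hg.locallyIntegrable.integrableOn_isCompact (hbdd a).isCompact_closure).mono_set
      subset_closure
  have hcontabs : ∀ b : ℝ, Continuous fun x : EuclideanSpace ℝ (Fin n) => |b - u x| ^ p :=
    fun b => (continuous_const.sub hcont).abs.rpow_const fun x => Or.inr hp0.le
  -- scaling estimate
  have hscale : ∀ (a l : ℝ), 0 < l → l ≤ 1 →
      l ^ n * (volume {x : EuclideanSpace ℝ (Fin n) | u x < a}).toReal ≤
        (volume {x : EuclideanSpace ℝ (Fin n) | u x < l * a}).toReal := by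
    intro a l hl hl1
    have hsub : l • {x : EuclideanSpace ℝ (Fin n) | u x < a} ⊆ {x | u x < l * a} := by
      rintro x ⟨y, hy, rfl⟩
      have hy' : u y < a := hy
      have hkey := hu.2 (mem_univ y) (mem_univ (0 : EuclideanSpace ℝ (Fin n))) hl.le
        (by linarith : (0:ℝ) ≤ 1 - l) (by ring)
      simp only [smul_zero, add_zero, h0, mul_zero, smul_eq_mul] at hkey
      have : u (l • y) ≤ l * u y := by linarith [hkey]
      exact lt_of_le_of_lt this ((mul_lt_mul_iff_right₀ hl).mpr hy')
    have hm : volume (l • {x : EuclideanSpace ℝ (Fin n) | u x < a}) ≤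
        volume {x : EuclideanSpace ℝ (Fin n) | u x < l * a} := measure_mono hsub
    rw [Measure.addHaar_smul_of_nonneg volume hl.le, finrank_euclideanSpace_fin] at hm
    have := ENNReal.toReal_mono (hfin (l * a)) hm
    rwa [ENNReal.toReal_mul, ENNReal.toReal_ofReal (by positivity)] at this
  set I₂ : ℝ := ∫ x in {x : EuclideanSpace ℝ (Fin n) | u x < s₂}, |s₂ - u x| ^ p with hI₂def
  set I₁ : ℝ := ∫ x in {x : EuclideanSpace ℝ (Fin n) | u x < s₁}, |s₁ - u x| ^ p with hI₁def
  -- lower bound for I₂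
  have hlow : s₃ ^ p * (volume {x : EuclideanSpace ℝ (Fin n) | u x < s₃}).toReal ≤ I₂ := by
    have step1 : s₃ ^ p * (volume {x : EuclideanSpace ℝ (Fin n) | u x < s₃}).toReal ≤
        ∫ x in {x : EuclideanSpace ℝ (Fin n) | u x < s₃}, |s₂ - u x| ^ p := by
      refine setIntegral_ge_of_const_le_real (hmeas s₃) (hfin s₃) (fun x hx => ?_)
        (hint s₃ _ (hcontabs s₂))
      have hx' : u x < s₃ := hx
      have h1 : s₃ ≤ |s₂ - u x| := by
        rw [abs_of_pos (by linarith)]; linarith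
      exact Real.rpow_le_rpow hs3.le h1 hp0.le
    have step2 : (∫ x in {x : EuclideanSpace ℝ (Fin n) | u x < s₃}, |s₂ - u x| ^ p) ≤ I₂ := by
      refine setIntegral_mono_set (hint s₂ _ (hcontabs s₂))
        (Filter.Eventually.of_forall fun x => by positivity) (Filter.Eventually.of_forall ?_)
      intro x hx
      have hx' : u x < s₃ := hx
      exact (lt_of_lt_of_le hx' hs32 : u x < s₂)
    linarith
  have hI₂nonneg : 0 ≤ I₂ :=
    setIntegral_nonneg (hmeas s₂) fun x _ => by positivity
  -- pointwise bound on Ω s₁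
  have hptwise : ∀ x, u x < s₁ →
      |s₁ - u x| ^ p ≤ 2 ^ p * ((C₁ * C₂ * max (s₂ - u x) 0) ^ p + s₁ ^ p) := by
    intro x hx
    have hkey : C₁ * C₂ * s₂ = s₁ := by
      rw [hs₂def, hs₁def]; field_simp
    have hle : |s₁ - u x| ≤ C₁ * C₂ * max (s₂ - u x) 0 + s₁ := by
      rw [abs_of_pos (by linarith)]
      rcases le_or_gt (u x) 0 with hx0 | hx0
      · have hmax : s₂ - u x ≤ max (s₂ - u x) 0 := le_max_left _ _
        nlinarith [hmax, hCC1, hCC]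
      · have hmax : (0:ℝ) ≤ max (s₂ - u x) 0 := le_max_right _ _
        nlinarith [hmax, hCC]
    calc |s₁ - u x| ^ p ≤ (C₁ * C₂ * max (s₂ - u x) 0 + s₁) ^ p :=
          Real.rpow_le_rpow (abs_nonneg _) hle hp0.le
      _ ≤ 2 ^ p * ((C₁ * C₂ * max (s₂ - u x) 0) ^ p + s₁ ^ p) :=
          add_rpow_le_two_rpow (mul_nonneg hCC.le (le_max_right _ _)) hs1.le hp0.le
  -- integrability of the majorant pieces
  have hcontmax : Continuous fun x : EuclideanSpace ℝ (Fin n) => (max (s₂ - u x) 0) ^ p :=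
    ((continuous_const.sub hcont).max continuous_const).rpow_const fun x => Or.inr hp0.le
  have hcontmaj : Continuous fun x : EuclideanSpace ℝ (Fin n) =>
      2 ^ p * ((C₁ * C₂ * max (s₂ - u x) 0) ^ p + s₁ ^ p) := by
    refine continuous_const.mul (Continuous.add ?_ continuous_const)
    exact (continuous_const.mul ((continuous_const.sub hcont).max continuous_const)).rpow_const
      fun x => Or.inr hp0.le
  -- step: I₁ ≤ integral of majorant
  have hmono : I₁ ≤ ∫ x in {x : EuclideanSpace ℝ (Fin n) | u x < s₁},
      2 ^ p * ((C₁ * C₂ * max (s₂ - u x) 0) ^ p + s₁ ^ p) := by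
    refine setIntegral_mono_on (hint s₁ _ (hcontabs s₁)) (hint s₁ _ hcontmaj) (hmeas s₁) ?_
    intro x hx
    exact hptwise x hx
  -- compute the majorant integral
  have hsplit : (∫ x in {x : EuclideanSpace ℝ (Fin n) | u x < s₁},
        2 ^ p * ((C₁ * C₂ * max (s₂ - u x) 0) ^ p + s₁ ^ p)) =
      2 ^ p * ((C₁ * C₂) ^ p * (∫ x in {x : EuclideanSpace ℝ (Fin n) | u x < s₁},
        (max (s₂ - u x) 0) ^ p) +
        s₁ ^ p * (volume {x : EuclideanSpace ℝ (Fin n) | u x < s₁}).toReal) := by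
    rw [integral_const_mul]
    congr 1
    rw [integral_add (f := fun x => (C₁ * C₂ * max (s₂ - u x) 0) ^ p) (hint s₁ _ ((continuous_const.mul ((continuous_const.sub hcont).max
      continuous_const)).rpow_const fun x => Or.inr hp0.le)) (integrableOn_const
      (hfin s₁))]
    congr 1
    · have : ∀ x : EuclideanSpace ℝ (Fin n),
          (C₁ * C₂ * max (s₂ - u x) 0) ^ p = (C₁ * C₂) ^ p * (max (s₂ - u x) 0) ^ p :=
        fun x => Real.mul_rpow hCC.le (le_max_right _ _)
      simp_rw [this]
      rw [integral_const_mul]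
    · rw [setIntegral_const, smul_eq_mul, mul_comm, Measure.real]
  -- the max-integral localizes to Ω s₂
  have hloc : (∫ x in {x : EuclideanSpace ℝ (Fin n) | u x < s₁}, (max (s₂ - u x) 0) ^ p) = I₂ := by
    rw [setIntegral_eq_of_subset_of_forall_diff_eq_zero (hmeas s₁)
      (fun x hx => lt_of_lt_of_le hx hs21)
      (fun x hx => by
        have hx2 : ¬ (u x < s₂) := hx.2
        push_neg at hx2
        rw [max_eq_right (by linarith), Real.zero_rpow hp0.ne'])]
    refine setIntegral_congr_fun (hmeas s₂) fun x hx => ?_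
    have hx' : u x < s₂ := hx
    rw [max_eq_left (by linarith), abs_of_pos (by linarith)]
  -- volume comparison for Ω s₁ vs Ω s₃
  have hvol : s₁ ^ p * (volume {x : EuclideanSpace ℝ (Fin n) | u x < s₁}).toReal ≤
      (2 * C₁ * C₂) ^ p * (2 * C₁ * C₂) ^ n *
        (s₃ ^ p * (volume {x : EuclideanSpace ℝ (Fin n) | u x < s₃}).toReal) := by
    have hD : (0:ℝ) < 2 * C₁ * C₂ := by positivity
    have hD1 : (1:ℝ) ≤ 2 * C₁ * C₂ := by nlinarith
    have hl : (0:ℝ) < (2 * C₁ * C₂)⁻¹ := by positivity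
    have hscaled := hscale s₁ ((2 * C₁ * C₂)⁻¹) hl (inv_le_one_of_one_le₀ hD1)
    have hls : (2 * C₁ * C₂)⁻¹ * s₁ = s₃ := by
      rw [hs₁def, hs₃def, hs₂def]; field_simp
    rw [hls] at hscaled
    have hs₁s₃ : s₁ = 2 * C₁ * C₂ * s₃ := by
      rw [hs₁def, hs₃def, hs₂def]; field_simp
    have hpow : s₁ ^ p = (2 * C₁ * C₂) ^ p * s₃ ^ p := by
      rw [hs₁s₃, Real.mul_rpow hD.le hs3.le]
    have hvol' : (volume {x : EuclideanSpace ℝ (Fin n) | u x < s₁}).toReal ≤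
        (2 * C₁ * C₂) ^ n * (volume {x : EuclideanSpace ℝ (Fin n) | u x < s₃}).toReal := by
      have hcancel : ((2 * C₁ * C₂)⁻¹) ^ n * (2 * C₁ * C₂) ^ n = 1 := by
        rw [← mul_pow, inv_mul_cancel₀ hD.ne', one_pow]
      nlinarith [hscaled, pow_pos hl n, pow_pos hD n,
        ENNReal.toReal_nonneg (a := volume {x : EuclideanSpace ℝ (Fin n) | u x < s₁})]
    rw [hpow]
    have hs3p : (0:ℝ) ≤ s₃ ^ p := Real.rpow_nonneg hs3.le p
    have hDp : (0:ℝ) ≤ (2 * C₁ * C₂) ^ p := Real.rpow_nonneg hD.le p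
    have hmul := mul_le_mul_of_nonneg_left hvol' (mul_nonneg hDp hs3p)
    nlinarith [hmul]
  -- combine
  have hfinal : I₁ ≤ C₃ * I₂ := by
    have h2p : (0:ℝ) ≤ 2 ^ p := Real.rpow_nonneg (by norm_num) p
    calc I₁ ≤ 2 ^ p * ((C₁ * C₂) ^ p * I₂ +
          s₁ ^ p * (volume {x : EuclideanSpace ℝ (Fin n) | u x < s₁}).toReal) := by
          rw [← hloc]; rw [hsplit] at hmono; exact hmono
      _ ≤ 2 ^ p * ((C₁ * C₂) ^ p * I₂ +
          (2 * C₁ * C₂) ^ p * (2 * C₁ * C₂) ^ n * I₂) := by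
          have : (2 * C₁ * C₂) ^ p * (2 * C₁ * C₂) ^ n *
              (s₃ ^ p * (volume {x : EuclideanSpace ℝ (Fin n) | u x < s₃}).toReal) ≤
              (2 * C₁ * C₂) ^ p * (2 * C₁ * C₂) ^ n * I₂ := by
            have hDp : (0:ℝ) ≤ (2 * C₁ * C₂) ^ p * (2 * C₁ * C₂) ^ n := by positivity
            exact mul_le_mul_of_nonneg_left hlow hDp
          nlinarith [hvol, this]
      _ = C₃ * I₂ := by rw [hC₃def]; ring
  rw [inv_mul_le_iff₀ hC₃pos]
  exact hfinal
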